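/- Let H be an N×m real matrix with full row rank, y ∈ R^N, and let s^{(p)}, s^{(p+1)} be consecutive iterates of the ECME thresholding map s^{(p+1)} = T_r(s^{(p)} + H^T(HH^T)^{-1}(y - Hs^{(p)})). Let A = supp(s^{(p)}) ∪ supp(s^{(p+1)}). Then E(s^{(p)}) - E(s^{(p+1)}) ≥ [1 - λ_max(H_A^T (HH^T)^{-1} H_A)] · ‖s^{(p+1)} - s^{(p)}‖₂², where E(s) = (y - Hs)^T(HH^T)^{-1}(y - Hs). -/

import Mathlib

open Matrix Set

/-- Number of nonzero entries (ℓ₀ "norm"). -/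
noncomputable def l0 {m : ℕ} (s : Fin m → ℝ) : ℕ := {j | s j ≠ 0}.ncard

/-- The weighted squared error E(s) = (y - Hs)ᵀ (HHᵀ)⁻¹ (y - Hs). -/
noncomputable def Efun {N m : ℕ} (H : Matrix (Fin N) (Fin m) ℝ) (y : Fin N → ℝ)
    (s : Fin m → ℝ) : ℝ :=
  (y - H *ᵥ s) ⬝ᵥ ((H * Hᵀ)⁻¹ *ᵥ (y - H *ᵥ s))

/-- Restriction of H to the columns with indices satisfying P. -/
def colRestrict {N m : ℕ} (H : Matrix (Fin N) (Fin m) ℝ) (P : Fin m → Prop) :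
    Matrix (Fin N) {j // P j} ℝ := fun i j => H i j

open scoped Classical in
lemma rayleigh_le {n : Type*} [Fintype n] [DecidableEq n] {M : Matrix n n ℝ}
    (hM : M.IsHermitian) (x : n → ℝ) :
    x ⬝ᵥ (M *ᵥ x) ≤ (⨆ i, hM.eigenvalues i) * (x ⬝ᵥ x) := by
  rcases isEmpty_or_nonempty n with hn | hn
  · simp [dotProduct]
  set c := ⨆ i, hM.eigenvalues i with hc
  have hle : ∀ i, hM.eigenvalues i ≤ c := fun i =>
    le_ciSup (Set.Finite.bddAbove (Set.finite_range _)) i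
  set U : Matrix n n ℝ := (hM.eigenvectorUnitary : Matrix n n ℝ) with hU
  have hUU : U * star U = 1 := (Matrix.mem_unitaryGroup_iff).mp hM.eigenvectorUnitary.2
  have hspec := hM.spectral_theorem
  set w : n → ℝ := star U *ᵥ x with hw
  have key : x ⬝ᵥ (M *ᵥ x) = ∑ i, hM.eigenvalues i * (w i)^2 := by
    conv_lhs => rw [hspec, Unitary.conjStarAlgAut_apply]
    rw [← mulVec_mulVec, ← mulVec_mulVec, dotProduct_mulVec (v := x),
      ← mulVec_transpose]
    have hsU : Uᵀ = star U := by
      rw [← conjTranspose_eq_transpose_of_trivial]; rfl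
    rw [hsU, ← hw]
    simp [dotProduct, mulVec_diagonal, Function.comp]
    ring_nf
    exact Finset.sum_congr rfl fun i _ => by ring
  have hww : w ⬝ᵥ w = x ⬝ᵥ x := by
    have hsU : Uᵀ = star U := by
      rw [← conjTranspose_eq_transpose_of_trivial]; rfl
    have h1 : w = x ᵥ* U := by rw [hw, ← hsU, mulVec_transpose]
    nth_rewrite 1 [h1]
    rw [dotProduct_mulVec, vecMul_vecMul, hUU, vecMul_one]
  calc x ⬝ᵥ (M *ᵥ x) = ∑ i, hM.eigenvalues i * (w i)^2 := key
    _ ≤ ∑ i, c * (w i)^2 :=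
        Finset.sum_le_sum (fun i _ => mul_le_mul_of_nonneg_right (hle i) (sq_nonneg _))
    _ = c * (w ⬝ᵥ w) := by rw [← Finset.mul_sum]; simp [dotProduct, sq]
    _ = c * (x ⬝ᵥ x) := by rw [hww]

lemma sum_subtype_support {m : ℕ} (P : Fin m → Prop) [DecidablePred P] (g : Fin m → ℝ)
    (hg : ∀ j, ¬ P j → g j = 0) : ∑ j : {j // P j}, g j.val = ∑ j, g j := by
  rw [← Finset.sum_subtype (Finset.univ.filter P)
      (fun x => by simp) (fun j => g j)]
  exact Finset.sum_filter_of_ne (fun x _ hx => by by_contra hP; exact hx (hg x hP))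

open scoped Classical in
theorem ecme_error_decrease_bound {N m : ℕ} (H : Matrix (Fin N) (Fin m) ℝ)
    (hNm : N ≤ m) (hrank : H.rank = N) (y : Fin N → ℝ) (r : ℕ)
    (sp sp1 : Fin m → ℝ) (hsp : l0 sp ≤ r) (hsp1 : l0 sp1 ≤ r)
    (hmin : ∀ s : Fin m → ℝ, l0 s ≤ r →
      ((sp + Hᵀ *ᵥ ((H * Hᵀ)⁻¹ *ᵥ (y - H *ᵥ sp)) - sp1) ⬝ᵥ
       (sp + Hᵀ *ᵥ ((H * Hᵀ)⁻¹ *ᵥ (y - H *ᵥ sp)) - sp1)) ≤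
      ((sp + Hᵀ *ᵥ ((H * Hᵀ)⁻¹ *ᵥ (y - H *ᵥ sp)) - s) ⬝ᵥ
       (sp + Hᵀ *ᵥ ((H * Hᵀ)⁻¹ *ᵥ (y - H *ᵥ sp)) - s)))
    (h : ((colRestrict H (fun j => sp j ≠ 0 ∨ sp1 j ≠ 0))ᵀ * (H * Hᵀ)⁻¹ *
          colRestrict H (fun j => sp j ≠ 0 ∨ sp1 j ≠ 0)).IsHermitian) :
    Efun H y sp - Efun H y sp1 ≥
      (1 - ⨆ i : {j // sp j ≠ 0 ∨ sp1 j ≠ 0}, h.eigenvalues i) *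
        ((sp1 - sp) ⬝ᵥ (sp1 - sp)) := by
  set B : Matrix (Fin N) (Fin N) ℝ := (H * Hᵀ)⁻¹ with hBdef
  have hB : Bᵀ = B := by
    rw [hBdef, transpose_nonsing_inv, transpose_mul, transpose_transpose]
  set d : Fin m → ℝ := sp1 - sp with hd
  set e : Fin N → ℝ := y - H *ᵥ sp with he
  set g : Fin m → ℝ := Hᵀ *ᵥ (B *ᵥ e) with hgdef
  set f : Fin N → ℝ := H *ᵥ d with hf
  -- Step 1: from the minimization property
  have step1 := hmin sp hsp
  have e1 : sp + g - sp1 = g - d := by rw [hd]; abel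
  have e2 : sp + g - sp = g := by abel
  rw [e1, e2] at step1
  have expand : (g - d) ⬝ᵥ (g - d) = g ⬝ᵥ g - 2*(d ⬝ᵥ g) + d ⬝ᵥ d := by
    simp only [sub_dotProduct, dotProduct_sub]
    rw [dotProduct_comm g d]; ring
  have h2g : d ⬝ᵥ d ≤ 2 * (d ⬝ᵥ g) := by rw [expand] at step1; linarith
  have dg : d ⬝ᵥ g = f ⬝ᵥ (B *ᵥ e) := by
    rw [hgdef, dotProduct_mulVec, vecMul_transpose, hf]
  -- Step 2: energy decrease identity
  have esym : ∀ u v : Fin N → ℝ, u ⬝ᵥ (B *ᵥ v) = v ⬝ᵥ (B *ᵥ u) := by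
    intro u v
    rw [dotProduct_mulVec, ← mulVec_transpose, hB, dotProduct_comm]
  have hy1 : y - H *ᵥ sp1 = e - f := by
    rw [he, hf, hd, mulVec_sub]; abel
  have ediff : Efun H y sp - Efun H y sp1 = 2*(f ⬝ᵥ (B *ᵥ e)) - f ⬝ᵥ (B *ᵥ f) := by
    simp only [Efun, ← hBdef, ← he, hy1]
    simp only [sub_dotProduct, dotProduct_sub, mulVec_sub]
    linarith [esym e f]
  -- Step 3: quadratic form
  have quad : f ⬝ᵥ (B *ᵥ f) = d ⬝ᵥ ((Hᵀ * B * H) *ᵥ d) := by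
    rw [← mulVec_mulVec, ← mulVec_mulVec, dotProduct_mulVec (v := d),
      vecMul_transpose, hf]
  -- Step 4: restriction to the support union
  set P : Fin m → Prop := fun j => sp j ≠ 0 ∨ sp1 j ≠ 0 with hP
  have hd0 : ∀ j, ¬ P j → d j = 0 := by
    intro j hj
    have h1 : sp j = 0 := by by_contra hc; exact hj (Or.inl hc)
    have h2 : sp1 j = 0 := by by_contra hc; exact hj (Or.inr hc)
    rw [hd]; simp [h1, h2]
  set dA : {j // P j} → ℝ := fun j => d j.val with hdA
  have hdd : dA ⬝ᵥ dA = d ⬝ᵥ d := by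
    simp only [dotProduct, hdA]
    exact sum_subtype_support P (fun j => d j * d j) (fun j hj => by simp [hd0 j hj])
  have hMA : ∀ j k : {j // P j},
      ((colRestrict H P)ᵀ * B * colRestrict H P) j k = (Hᵀ * B * H) j.val k.val := by
    intro j k
    simp [Matrix.mul_apply, colRestrict]
  have hquad2 : dA ⬝ᵥ (((colRestrict H P)ᵀ * B * colRestrict H P) *ᵥ dA)
      = d ⬝ᵥ ((Hᵀ * B * H) *ᵥ d) := by
    simp only [dotProduct, mulVec, hdA]
    rw [← sum_subtype_support P (fun j => d j * ∑ k, (Hᵀ * B * H) j k * d k)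
        (fun j hj => by simp [hd0 j hj])]
    refine Finset.sum_congr rfl fun j _ => ?_
    congr 1
    rw [← sum_subtype_support P (fun k => (Hᵀ * B * H) j.val k * d k)
        (fun k hk => by simp [hd0 k hk])]
    exact Finset.sum_congr rfl fun k _ => by rw [hMA j k]
  -- Step 5: Rayleigh quotient bound
  have hray := rayleigh_le h dA
  rw [hquad2, hdd] at hray
  -- Conclude
  rw [ge_iff_le]
  calc (1 - ⨆ i : {j // P j}, h.eigenvalues i) * (d ⬝ᵥ d)
      = d ⬝ᵥ d - (⨆ i : {j // P j}, h.eigenvalues i) * (d ⬝ᵥ d) := by ring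
    _ ≤ 2 * (f ⬝ᵥ (B *ᵥ e)) - f ⬝ᵥ (B *ᵥ f) := by
        rw [quad]; rw [dg] at h2g; linarith
    _ = Efun H y sp - Efun H y sp1 := ediff.symm
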